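/- Let S : (𝔽₂)⁴ → 𝔽₂ be a balanced Boolean function of algebraic degree at most 2 (i.e. |S⁻¹(0)| = |S⁻¹(1)| = 8). Then the set V(S) = {u ∈ (𝔽₂)⁴ : the function x ↦ S(x+u)+S(x) is constant} is a linear subspace of (𝔽₂)⁴ of dimension at least 2. -/

import Mathlib

/-- The vector space `(𝔽₂)⁴`. -/
abbrev V4 := Fin 4 → ZMod 2

/-- The derivative `f̂_u : x ↦ f(x+u) + f(x)`. -/
def deriv4 (f : V4 → V4) (u x : V4) : V4 := f (x + u) + f x

/-- The 𝔽₂-dot product on `(𝔽₂)⁴`. -/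
def dot4 (v w : V4) : ZMod 2 := ∑ i, v i * w i

/-- `f` is weakly APN: for every `u ≠ 0`, `|Im f̂_u| > 4 = 2^{4-2}`. -/
def WeaklyAPN4 (f : V4 → V4) : Prop :=
  ∀ u : V4, u ≠ 0 → 4 < (Set.range (deriv4 f u)).ncard

/-- `f` is 4-differentially uniform. -/
def DiffUnif4 (f : V4 → V4) : Prop :=
  ∀ u : V4, u ≠ 0 → ∀ v : V4, {x : V4 | deriv4 f u x = v}.ncard ≤ 4

/-- The coefficient of the monomial `∏_{i ∈ S} xᵢ` in the algebraic normal form of `g`. -/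
def anfCoeff (g : V4 → ZMod 2) (S : Finset (Fin 4)) : ZMod 2 :=
  ∑ x ∈ Finset.univ.filter (fun x : V4 => ∀ i, x i = 1 → i ∈ S), g x

/-- The algebraic degree of `g` is at most `d`. -/
def DegLE (g : V4 → ZMod 2) (d : ℕ) : Prop :=
  ∀ S : Finset (Fin 4), d < S.card → anfCoeff g S = 0

/-- The algebraic degree of `g` equals `d`. -/
def DegEq (g : V4 → ZMod 2) (d : ℕ) : Prop := DegLE g d ∧ ¬ DegLE g (d - 1)

/-- The component function `⟨f, v⟩ : x ↦ ⟨f(x), v⟩`. -/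
def comp4 (f : V4 → V4) (v : V4) (x : V4) : ZMod 2 := dot4 (f x) v

/-- `n₃(f)`: the number of nonzero `v` with `deg⟨f,v⟩ = 3`. -/
noncomputable def n3 (f : V4 → V4) : ℕ := {v : V4 | v ≠ 0 ∧ DegEq (comp4 f v) 3}.ncard

/-- The Walsh coefficient `W_f(a,b) = Σ_x (-1)^{⟨f(x),b⟩ + ⟨x,a⟩}`. -/
def walsh (f : V4 → V4) (a b : V4) : ℤ :=
  ∑ x : V4, (-1 : ℤ) ^ (dot4 (f x) b + dot4 x a).val

/-- `Lin(f) = n`: `n` is the maximum of `|W_f(a,b)|` over all `a` and nonzero `b`. -/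
def LinEq (f : V4 → V4) (n : ℤ) : Prop :=
  IsGreatest {t : ℤ | ∃ a b : V4, b ≠ 0 ∧ t = |walsh f a b|} n

/-- `a` has Hamming weight 1. -/
def Wt1 (a : V4) : Prop := {i : Fin 4 | a i ≠ 0}.ncard = 1

/-- `Lin₁(f) = n`: max of `|W_f(a,b)|` over `a, b` of Hamming weight 1. -/
def Lin1Eq (f : V4 → V4) (n : ℤ) : Prop :=
  IsGreatest {t : ℤ | ∃ a b : V4, Wt1 a ∧ Wt1 b ∧ t = |walsh f a b|} n

/-- `Diff₁(f) = n`: max of `|{x : f̂_a(x) = b}|` over `a, b` of Hamming weight 1. -/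
def Diff1Eq (f : V4 → V4) (n : ℕ) : Prop :=
  IsGreatest {t : ℕ | ∃ a b : V4, Wt1 a ∧ Wt1 b ∧ t = {x : V4 | deriv4 f a x = b}.ncard} n

/-- `f` is strongly 2-anti-invariant. -/
def StronglyAntiInv2 (f : V4 → V4) : Prop :=
  ∀ V W : Submodule (ZMod 2) V4, f '' (V : Set V4) = (W : Set V4) →
    (Module.finrank (ZMod 2) V = Module.finrank (ZMod 2) W ∧ Module.finrank (ZMod 2) W < 2)
    ∨ (V = ⊤ ∧ W = ⊤)

/-- Identify `k : ℕ` with a vector of `(𝔽₂)⁴` via binary digits. -/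
def toVec (k : ℕ) : V4 := fun i => (((k / 2 ^ (i : ℕ)) % 2 : ℕ) : ZMod 2)

/-- Identify a vector of `(𝔽₂)⁴` with a natural number via binary digits. -/
def toNat4 (x : V4) : ℕ := ∑ i, (x i).val * 2 ^ (i : ℕ)

/-- The function on `(𝔽₂)⁴` given by a value table of integers. -/
def tableFun (L : List ℕ) (x : V4) : V4 := toVec (L.getD (toNat4 x) 0)
/-! ### Auxiliary machinery for the proof -/

section LinearStructures

/-- The support of a vector as a finset. -/
def suppV (x : V4) : Finset (Fin 4) := Finset.univ.filter (fun i => x i = 1)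

/-- The monomial `∏_{i ∈ T} x i`. -/
def monoV (T : Finset (Fin 4)) (x : V4) : ZMod 2 := ∏ i ∈ T, x i

lemma zmod2_cases' (a : ZMod 2) : a = 0 ∨ a = 1 := by revert a; decide

set_option maxRecDepth 10000 in
lemma inv_delta : ∀ y x : V4,
    (∑ T ∈ (suppV x).powerset, anfCoeff (fun z => if z = y then 1 else 0) T)
      = if x = y then (1:ZMod 2) else 0 := by decide

lemma anf_inv (g : V4 → ZMod 2) (x : V4) :
    g x = ∑ T ∈ (suppV x).powerset, anfCoeff g T := by
  have key : ∀ T : Finset (Fin 4),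
      (∑ y : V4, anfCoeff (fun z => if z = y then 1 else 0) T * g y) = anfCoeff g T := by
    intro T
    unfold anfCoeff
    simp_rw [Finset.sum_mul]
    rw [Finset.sum_comm]
    apply Finset.sum_congr rfl
    intro z _
    simp
  calc g x = ∑ y : V4, (if x = y then (1:ZMod 2) else 0) * g y := by simp
    _ = ∑ y : V4, (∑ T ∈ (suppV x).powerset, anfCoeff (fun z => if z = y then 1 else 0) T) * g y := by
        simp_rw [inv_delta]
    _ = ∑ T ∈ (suppV x).powerset, anfCoeff g T := by
        simp_rw [Finset.sum_mul]
        rw [Finset.sum_comm]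
        simp_rw [key]

lemma mono_eq (T : Finset (Fin 4)) (x : V4) :
    monoV T x = if T ⊆ suppV x then 1 else 0 := by
  by_cases h : T ⊆ suppV x
  · rw [if_pos h]
    apply Finset.prod_eq_one
    intro i hi
    have := h hi
    simpa [suppV] using this
  · rw [if_neg h]
    obtain ⟨i, hiT, hins⟩ := Finset.not_subset.mp h
    apply Finset.prod_eq_zero hiT
    rcases zmod2_cases' (x i) with h0 | h1
    · exact h0
    · exact absurd (by simpa [suppV] using h1) hins

lemma anf_inv' (g : V4 → ZMod 2) (x : V4) :
    g x = ∑ T : Finset (Fin 4), anfCoeff g T * monoV T x := by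
  rw [anf_inv g x]
  rw [← Finset.sum_filter_add_sum_filter_not Finset.univ (fun T => T ⊆ suppV x)]
  have h1 : ∀ T ∈ Finset.univ.filter (fun T : Finset (Fin 4) => T ⊆ suppV x),
      anfCoeff g T * monoV T x = anfCoeff g T := by
    intro T hT; rw [mono_eq, if_pos (Finset.mem_filter.mp hT).2, mul_one]
  have h2 : ∀ T ∈ Finset.univ.filter (fun T : Finset (Fin 4) => ¬ T ⊆ suppV x),
      anfCoeff g T * monoV T x = 0 := by
    intro T hT; rw [mono_eq, if_neg (Finset.mem_filter.mp hT).2, mul_zero]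
  rw [Finset.sum_congr rfl h1, Finset.sum_congr rfl h2, Finset.sum_const_zero, add_zero]
  apply Finset.sum_congr _ (fun _ _ => rfl)
  ext T; simp [Finset.mem_powerset]

/-- The "second difference" of a monomial. -/
def bmV (T : Finset (Fin 4)) (u v : V4) : ZMod 2 :=
  monoV T (u + v) + monoV T u + monoV T v + monoV T 0

lemma bm_lin (T : Finset (Fin 4)) (hT : T.card ≤ 2) (u v x : V4) :
    bmV T (u + v) x + bmV T u x + bmV T v x = 0 := by
  obtain h0 | h1 | h2 : T.card = 0 ∨ T.card = 1 ∨ T.card = 2 := by omega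
  · rw [Finset.card_eq_zero] at h0; subst h0
    simp [bmV, monoV]; decide
  · obtain ⟨i, rfl⟩ := Finset.card_eq_one.mp h1
    simp only [bmV, monoV, Finset.prod_singleton, Pi.add_apply, Pi.zero_apply]
    generalize u i = a; generalize v i = b; generalize x i = c
    revert a b c; decide
  · obtain ⟨i, j, hij, rfl⟩ := Finset.card_eq_two.mp h2
    simp only [bmV, monoV, Finset.prod_pair hij, Pi.add_apply, Pi.zero_apply]
    generalize u i = a; generalize u j = b; generalize v i = c; generalize v j = d
    generalize x i = e; generalize x j = f
    revert a b c d e f; decide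

/-- The symmetric bilinear form associated to `S`. -/
def Bf (S : V4 → ZMod 2) (u v : V4) : ZMod 2 := S (u + v) + S u + S v + S 0

lemma Bf_eq_sum (S : V4 → ZMod 2) (u v : V4) :
    Bf S u v = ∑ T : Finset (Fin 4), anfCoeff S T * bmV T u v := by
  unfold Bf
  rw [anf_inv' S (u + v), anf_inv' S u, anf_inv' S v, anf_inv' S 0,
    ← Finset.sum_add_distrib, ← Finset.sum_add_distrib, ← Finset.sum_add_distrib]
  exact Finset.sum_congr rfl fun T _ => by unfold bmV; ring

lemma Bf_addl (S : V4 → ZMod 2) (hdeg : DegLE S 2) (u v x : V4) :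
    Bf S (u + v) x = Bf S u x + Bf S v x := by
  have h : Bf S (u + v) x + Bf S u x + Bf S v x = 0 := by
    rw [Bf_eq_sum, Bf_eq_sum, Bf_eq_sum, ← Finset.sum_add_distrib, ← Finset.sum_add_distrib]
    apply Finset.sum_eq_zero
    intro T _
    by_cases hT : T.card ≤ 2
    · rw [← mul_add, ← mul_add, bm_lin T hT, mul_zero]
    · rw [hdeg T (by omega)]; ring
  have cancel : ∀ a b c : ZMod 2, a + b + c = 0 → a = b + c := by decide
  exact cancel _ _ _ h

lemma Bf_symm (S : V4 → ZMod 2) (u v : V4) : Bf S u v = Bf S v u := by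
  unfold Bf; rw [add_comm u v]; ring

lemma Bf_zerol (S : V4 → ZMod 2) (v : V4) : Bf S 0 v = 0 := by
  unfold Bf; rw [zero_add]
  generalize S v = a; generalize S 0 = b
  revert a b; decide

lemma Bf_addr (S : V4 → ZMod 2) (hdeg : DegLE S 2) (u v x : V4) :
    Bf S x (u + v) = Bf S x u + Bf S x v := by
  rw [Bf_symm, Bf_addl S hdeg, Bf_symm S u x, Bf_symm S v x]

lemma derivS_eq (S : V4 → ZMod 2) (u x : V4) :
    S (x + u) + S x = Bf S u x + (S u + S 0) := by
  unfold Bf; rw [add_comm u x]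
  generalize S (x + u) = a; generalize S u = b; generalize S x = c; generalize S 0 = d
  revert a b c d; decide

lemma LS_iff (S : V4 → ZMod 2) (u : V4) :
    (∀ x, S (x + u) + S x = S u + S 0) ↔ ∀ x, Bf S u x = 0 := by
  apply forall_congr'
  intro x
  rw [derivS_eq]
  generalize Bf S u x = a; generalize S u + S 0 = c
  constructor
  · intro h; exact add_right_cancel (h.trans (zero_add c).symm)
  · intro h; rw [h, zero_add]

lemma v4_add_self (w : V4) : w + w = 0 := by
  funext i
  show w i + w i = (0 : ZMod 2)
  have : ∀ a : ZMod 2, a + a = 0 := by decide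
  exact this (w i)

lemma card_univ_v4 : (Finset.univ : Finset V4).card = 16 := by decide

lemma addfiber8 (f : V4 → ZMod 2) (hadd : ∀ a b : V4, f (a + b) = f a + f b)
    (z : V4) (hz : f z ≠ 0) (c : ZMod 2) :
    (Finset.univ.filter (fun x : V4 => f x = c)).card = 8 := by
  have hz1 : f z = 1 := (zmod2_cases' (f z)).resolve_left hz
  have hbij : (Finset.univ.filter (fun x : V4 => f x = 0)).card
      = (Finset.univ.filter (fun x : V4 => f x = 1)).card := by
    apply Finset.card_bij (fun x _ => x + z)
    · intro a ha
      simp only [Finset.mem_filter, Finset.mem_univ, true_and] at ha ⊢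
      rw [hadd, ha, hz1, zero_add]
    · intro a ha b hb h
      have := congrArg (fun w => w + z) h
      simpa [add_assoc, v4_add_self] using this
    · intro b hb
      simp only [Finset.mem_filter, Finset.mem_univ, true_and] at hb ⊢
      refine ⟨b + z, ?_, ?_⟩
      · rw [hadd, hb, hz1]; decide
      · rw [add_assoc, v4_add_self, add_zero]
  have hsplit : (Finset.univ.filter (fun x : V4 => f x = 0)).card
      + (Finset.univ.filter (fun x : V4 => f x = 1)).card = 16 := by
    have h1 : (Finset.univ.filter (fun x : V4 => f x = 1))
        = (Finset.univ.filter (fun x : V4 => ¬ f x = 0)) := by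
      apply Finset.filter_congr
      intro x _
      rcases zmod2_cases' (f x) with h | h <;> simp [h]
    rw [h1, Finset.card_filter_add_card_filter_not, card_univ_v4]
  rcases zmod2_cases' c with rfl | rfl <;> omega

section Counting
variable (S : V4 → ZMod 2)
  (hbal0 : {x : V4 | S x = 0}.ncard = 8) (hbal1 : {x : V4 | S x = 1}.ncard = 8)

include hbal0 hbal1 in
lemma fiber8 (c : ZMod 2) : (Finset.univ.filter (fun y : V4 => S y = c)).card = 8 := by
  have conv : ∀ c : ZMod 2, {x : V4 | S x = c}.ncard
      = (Finset.univ.filter (fun y : V4 => S y = c)).card := by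
    intro c
    rw [Set.ncard_eq_toFinset_card']
    congr 1
    ext x
    simp
  rcases zmod2_cases' c with rfl | rfl
  · rw [← conv, hbal0]
  · rw [← conv, hbal1]

include hbal0 hbal1 in
lemma count_main :
    ∑ u : V4, (Finset.univ.filter (fun x : V4 => S (x + u) = S x)).card = 128 := by
  have step1 : ∀ u : V4, (Finset.univ.filter (fun x : V4 => S (x + u) = S x)).card
      = ∑ x : V4, (if S (x + u) = S x then 1 else 0) := fun u => Finset.card_filter _ _
  simp_rw [step1]
  rw [Finset.sum_comm]
  have step2 : ∀ x : V4, (∑ u : V4, (if S (x + u) = S x then 1 else 0))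
      = (Finset.univ.filter (fun y : V4 => S y = S x)).card := by
    intro x
    rw [Finset.card_filter]
    apply Finset.sum_nbij' (fun u => x + u) (fun y => x + y) <;>
      simp [← add_assoc, v4_add_self]
  simp_rw [step2, fiber8 S hbal0 hbal1]
  rw [Finset.sum_const, card_univ_v4]; rfl

include hbal0 hbal1 in
lemma fact1 (hdeg : DegLE S 2) : ∃ u : V4, u ≠ 0 ∧ ∀ x, Bf S u x = 0 := by
  by_contra hcon
  push_neg at hcon
  have k0 : (Finset.univ.filter (fun x : V4 => S (x + 0) = S x)).card = 16 := by
    rw [Finset.filter_true_of_mem (fun x _ => by rw [add_zero]), card_univ_v4]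
  have ku : ∀ u : V4, u ≠ 0 →
      (Finset.univ.filter (fun x : V4 => S (x + u) = S x)).card = 8 := by
    intro u hu
    obtain ⟨z, hz⟩ := hcon u hu
    have hpred : ∀ x : V4, (S (x + u) = S x) ↔ (Bf S u x = S u + S 0) := by
      intro x
      have hd := derivS_eq S u x
      have scalar : ∀ a b p q : ZMod 2, a + b = p + q → ((a = b) ↔ (p = q)) := by decide
      exact scalar _ _ _ _ hd
    rw [Finset.filter_congr (fun x _ => hpred x)]
    exact addfiber8 (fun x => Bf S u x) (fun a b => Bf_addr S hdeg a b u) z hz _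
  have hsum := count_main S hbal0 hbal1
  rw [← Finset.add_sum_erase Finset.univ _ (Finset.mem_univ (0 : V4))] at hsum
  rw [k0] at hsum
  rw [Finset.sum_congr rfl (fun u hu => ku u (Finset.ne_of_mem_erase hu))] at hsum
  rw [Finset.sum_const, Finset.card_erase_of_mem (Finset.mem_univ _), card_univ_v4,
    smul_eq_mul] at hsum
  omega

end Counting

/-! ### The rank of an alternating form is even: brute force over 4×4 matrices -/


def eV (i : Fin 4) : V4 := fun j => if j = i then 1 else 0

section Basis
variable (S : V4 → ZMod 2)

lemma Bf_sum (s : Finset (Fin 4)) (w : Fin 4 → V4) (v : V4) (hdeg : DegLE S 2) :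
    Bf S (∑ i ∈ s, w i) v = ∑ i ∈ s, Bf S (w i) v := by
  induction s using Finset.induction_on with
  | empty => simpa using Bf_zerol S v
  | insert a s h ih => rw [Finset.sum_insert h, Finset.sum_insert h, Bf_addl S hdeg, ih]

lemma v4_decomp (u : V4) : u = ∑ i : Fin 4, u i • eV i := by
  funext j
  rw [Finset.sum_apply]
  simp only [Pi.smul_apply, eV, smul_eq_mul]
  rw [Finset.sum_congr rfl (fun i _ => by rw [mul_ite, mul_one, mul_zero]),
    Finset.sum_ite_eq Finset.univ j (fun i => u i)]
  simp

lemma Bf_smul (c : ZMod 2) (w v : V4) : Bf S (c • w) v = c * Bf S w v := by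
  rcases zmod2_cases' c with rfl | rfl
  · rw [zero_smul, Bf_zerol, zero_mul]
  · rw [one_smul, one_mul]

lemma Bf_expand (hdeg : DegLE S 2) (u v : V4) :
    Bf S u v = ∑ i : Fin 4, u i * Bf S (eV i) v := by
  conv_lhs => rw [v4_decomp u]
  rw [Bf_sum S _ _ _ hdeg]
  exact Finset.sum_congr rfl fun i _ => Bf_smul S _ _ _

lemma LS_iff_basis (hdeg : DegLE S 2) (u : V4) :
    (∀ x, Bf S u x = 0) ↔ ∀ j : Fin 4, (∑ i : Fin 4, u i * Bf S (eV i) (eV j)) = 0 := by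
  constructor
  · intro h j; rw [← Bf_expand S hdeg]; exact h _
  · intro h x
    have h' : ∀ j, Bf S u (eV j) = 0 := fun j => by rw [Bf_expand S hdeg]; exact h j
    rw [Bf_symm, Bf_expand S hdeg]
    apply Finset.sum_eq_zero
    intro j _
    rw [Bf_symm S (eV j) u, h' j, mul_zero]

lemma Bf_diag (w : V4) : Bf S w w = 0 := by
  unfold Bf
  rw [v4_add_self]
  generalize S w = a; generalize S 0 = b
  revert a b; decide

set_option maxRecDepth 40000 in
lemma matfact' : ∀ a b c d e f : ZMod 2,
    (Finset.univ.filter (fun u : V4 =>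
      (u 0 * 0 + u 1 * a + u 2 * b + u 3 * c = 0) ∧
      (u 0 * a + u 1 * 0 + u 2 * d + u 3 * e = 0) ∧
      (u 0 * b + u 1 * d + u 2 * 0 + u 3 * f = 0) ∧
      (u 0 * c + u 1 * e + u 2 * f + u 3 * 0 = 0))).card ≠ 2 := by
  decide



lemma fact2 (S : V4 → ZMod 2) (hdeg : DegLE S 2) :
    (Finset.univ.filter (fun u : V4 => ∀ x, Bf S u x = 0)).card ≠ 2 := by
  have hfil : (Finset.univ.filter (fun u : V4 => ∀ x, Bf S u x = 0))
      = (Finset.univ.filter (fun u : V4 =>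
      (u 0 * 0 + u 1 * (Bf S (eV 0) (eV 1)) + u 2 * (Bf S (eV 0) (eV 2)) + u 3 * (Bf S (eV 0) (eV 3)) = 0) ∧
      (u 0 * (Bf S (eV 0) (eV 1)) + u 1 * 0 + u 2 * (Bf S (eV 1) (eV 2)) + u 3 * (Bf S (eV 1) (eV 3)) = 0) ∧
      (u 0 * (Bf S (eV 0) (eV 2)) + u 1 * (Bf S (eV 1) (eV 2)) + u 2 * 0 + u 3 * (Bf S (eV 2) (eV 3)) = 0) ∧
      (u 0 * (Bf S (eV 0) (eV 3)) + u 1 * (Bf S (eV 1) (eV 3)) + u 2 * (Bf S (eV 2) (eV 3)) + u 3 * 0 = 0))) := by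
    apply Finset.filter_congr
    intro u _
    rw [LS_iff_basis S hdeg u]
    have e4 : ∀ j : Fin 4, (∑ i : Fin 4, u i * Bf S (eV i) (eV j))
        = u 0 * Bf S (eV 0) (eV j) + u 1 * Bf S (eV 1) (eV j)
          + u 2 * Bf S (eV 2) (eV j) + u 3 * Bf S (eV 3) (eV j) :=
      fun j => Fin.sum_univ_four _
    constructor
    · intro h
      have h0 := h 0; have h1 := h 1; have h2 := h 2; have h3 := h 3
      rw [e4] at h0 h1 h2 h3
      rw [Bf_diag S (eV 0), Bf_symm S (eV 1) (eV 0), Bf_symm S (eV 2) (eV 0),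
        Bf_symm S (eV 3) (eV 0)] at h0
      rw [Bf_diag S (eV 1), Bf_symm S (eV 2) (eV 1), Bf_symm S (eV 3) (eV 1)] at h1
      rw [Bf_diag S (eV 2), Bf_symm S (eV 3) (eV 2)] at h2
      rw [Bf_diag S (eV 3)] at h3
      exact ⟨h0, h1, h2, h3⟩
    · rintro ⟨h0, h1, h2, h3⟩ j
      have g0 : (∑ i : Fin 4, u i * Bf S (eV i) (eV 0)) = 0 := by
        rw [e4 0, Bf_diag S (eV 0), Bf_symm S (eV 1) (eV 0), Bf_symm S (eV 2) (eV 0),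
          Bf_symm S (eV 3) (eV 0)]; exact h0
      have g1 : (∑ i : Fin 4, u i * Bf S (eV i) (eV 1)) = 0 := by
        rw [e4 1, Bf_diag S (eV 1), Bf_symm S (eV 2) (eV 1), Bf_symm S (eV 3) (eV 1)]; exact h1
      have g2 : (∑ i : Fin 4, u i * Bf S (eV i) (eV 2)) = 0 := by
        rw [e4 2, Bf_diag S (eV 2), Bf_symm S (eV 3) (eV 2)]; exact h2
      have g3 : (∑ i : Fin 4, u i * Bf S (eV i) (eV 3)) = 0 := by
        rw [e4 3, Bf_diag S (eV 3)]; exact h3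
      fin_cases j
      · exact g0
      · exact g1
      · exact g2
      · exact g3
  rw [hfil]
  exact matfact' _ _ _ _ _ _

end Basis

end LinearStructures
/-- If `S : (𝔽₂)⁴ → 𝔽₂` is a balanced Boolean function of algebraic degree at most 2,
then `V(S) = {u : x ↦ S(x+u) + S(x) is constant}` is a linear subspace of `(𝔽₂)⁴`
of dimension at least 2. -/
theorem linear_structures_of_balanced_quadratic
    (S : V4 → ZMod 2)
    (hbal0 : {x : V4 | S x = 0}.ncard = 8) (hbal1 : {x : V4 | S x = 1}.ncard = 8)
    (hdeg : DegLE S 2) :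
    ∃ V : Submodule (ZMod 2) V4,
      (V : Set V4) = {u : V4 | ∃ c : ZMod 2, ∀ x : V4, S (x + u) + S x = c} ∧
      2 ≤ Module.finrank (ZMod 2) V := by
  classical
  set W : Set V4 := {u : V4 | ∀ x, Bf S u x = 0} with hW
  have hsmul : ∀ (c : ZMod 2) {u : V4}, u ∈ W → c • u ∈ W := by
    intro c u hu
    rcases zmod2_cases' c with rfl | rfl
    · rw [zero_smul]; intro x; exact Bf_zerol S x
    · rw [one_smul]; exact hu
  let V : Submodule (ZMod 2) V4 :=
    { carrier := W
      add_mem' := by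
        intro a b ha hb x
        rw [Bf_addl S hdeg, ha x, hb x, add_zero]
      zero_mem' := fun x => Bf_zerol S x
      smul_mem' := hsmul }
  refine ⟨V, ?_, ?_⟩
  · ext u
    constructor
    · intro hu
      exact ⟨S u + S 0, (LS_iff S u).mpr hu⟩
    · rintro ⟨c, hc⟩
      have hc0 : S u + S 0 = c := by
        have := hc 0
        rwa [zero_add] at this
      subst hc0
      exact (LS_iff S u).mp hc
  · -- cardinality of V is at least 3, hence at least 4 = 2^2
    have hF : (Finset.univ.filter (fun u : V4 => ∀ x, Bf S u x = 0)).card ≠ 2 :=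
      fact2 S hdeg
    obtain ⟨u₀, hu₀ne, hu₀⟩ := fact1 S hbal0 hbal1 hdeg
    have h0W : (0 : V4) ∈ W := fun x => Bf_zerol S x
    have hpair : ({0, u₀} : Finset V4) ⊆
        Finset.univ.filter (fun u : V4 => ∀ x, Bf S u x = 0) := by
      intro w hw
      simp only [Finset.mem_insert, Finset.mem_singleton] at hw
      rcases hw with rfl | rfl
      · simp only [Finset.mem_filter, Finset.mem_univ, true_and]; exact h0W
      · simp only [Finset.mem_filter, Finset.mem_univ, true_and]; exact hu₀
    have hge2 : 2 ≤ (Finset.univ.filter (fun u : V4 => ∀ x, Bf S u x = 0)).card := by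
      have := Finset.card_le_card hpair
      rwa [Finset.card_pair (Ne.symm hu₀ne)] at this
    have hge3 : 3 ≤ (Finset.univ.filter (fun u : V4 => ∀ x, Bf S u x = 0)).card := by
      omega
    -- card of the submodule
    have hcardV : Nat.card V = (Finset.univ.filter (fun u : V4 => ∀ x, Bf S u x = 0)).card := by
      have h1 : Nat.card V = W.ncard := by
        rw [← Nat.card_coe_set_eq]
        rfl
      rw [h1, Set.ncard_eq_toFinset_card']
      congr 1
      ext u
      simp [hW]
    letI hfin : Fintype V := Fintype.ofFinite _
    have hpow : Fintype.card V = 2 ^ Module.finrank (ZMod 2) V := by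
      have h := Module.card_eq_pow_finrank (K := ZMod 2) (V := V)
      rwa [ZMod.card] at h
    have hnat : Nat.card V = Fintype.card V := Nat.card_eq_fintype_card
    by_contra hlt
    push_neg at hlt
    interval_cases h : Module.finrank (ZMod 2) V <;> omega
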